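/- arXiv:1401.3796 — 2 statements merged into one kernel-verified Lean document; each statement's English description precedes it below -/
import Mathlib

section
/- Let 𝐗 = (𝐗(1), 𝐗(2), …) be an infinite exchangeable sequence of random variables taking values in a countable set (e.g. ℕ), and suppose that for every value i one has P(𝐗(1) = i, 𝐗(2) = i) = P(𝐗(1) = i) · P(𝐗(2) = i). Then the random variables 𝐗(1), 𝐗(2), … are independent and identically distributed. -/
open MeasureTheory ProbabilityTheory Filter Function
open scoped ENNReal ProbabilityTheory Topology

noncomputable section

namespace RTrees

variable {V W : Type*}

/-- The degree of a vertex, defined without decidability assumptions. -/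
def gdeg (G : SimpleGraph V) (v : V) : ℕ := (G.neighborSet v).ncard

/-- The number of labeled trees on `Fin n` with degree sequence `D`. -/
def treeCount (n : ℕ) (D : Fin n → ℕ) : ℕ :=
  Nat.card {T : SimpleGraph (Fin n) // T.IsTree ∧ ∀ v, gdeg T v = D v}

/-- `D` belongs to `𝒟_n`, i.e. it is the degree sequence of some labeled tree on `n` nodes. -/
def IsDegSeq (n : ℕ) (D : Fin n → ℕ) : Prop := 0 < treeCount n D

/-- `φ` is a labeled homomorphism from the numbered graph `(F, r)` to `G`. -/
def IsLabHom (F : SimpleGraph V) (r : V → ℕ) (G : SimpleGraph W) (φ : V → W) : Prop :=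
  (∀ ⦃u v⦄, F.Adj u v → G.Adj (φ u) (φ v)) ∧ ∀ v, gdeg G (φ v) = gdeg F v + r v

/-- The number of injective labeled homomorphisms from the numbered graph `(F,r)` to `G`. -/
def injLabCount (F : SimpleGraph V) (r : V → ℕ) (G : SimpleGraph W) : ℕ :=
  Nat.card {φ : V → W // Function.Injective φ ∧ IsLabHom F r G φ}

/-- The sum `R_C` of the remainder degrees over a connected component `C` of `F`. -/
def compRSum (F : SimpleGraph V) (r : V → ℕ) (C : F.ConnectedComponent) : ℕ :=
  ∑ᶠ j ∈ {j | F.connectedComponentMk j = C}, r j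

/-- The number of connected components of `F`. -/
def compCount (F : SimpleGraph V) : ℕ := Nat.card F.ConnectedComponent

/-- The quantity `H(r,F) = ∏_C [R_C · ∏_{j∈C} (D_F(j)+r_j−1)!/r_j!]`, as an
extended nonnegative real. -/
def He (F : SimpleGraph V) (r : V → ℕ) : ℝ≥0∞ :=
  ∏ᶠ C : F.ConnectedComponent,
    (compRSum F r C : ℝ≥0∞) *
      ∏ᶠ j ∈ {j | F.connectedComponentMk j = C},
        ((gdeg F j + r j - 1).factorial : ℝ≥0∞) / ((r j).factorial : ℝ≥0∞)

/-- The (vertex set of the) ball of radius `R` around `x` in `G`. -/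
def ballSet (G : SimpleGraph V) (x : V) (R : ℕ) : Set V :=
  {v | G.Reachable x v ∧ G.dist x v ≤ R}

lemma self_mem_ballSet (G : SimpleGraph V) (x : V) (R : ℕ) : x ∈ ballSet G x R :=
  ⟨SimpleGraph.Reachable.refl x, by simp [SimpleGraph.dist_self]⟩

/-- The ball of radius `R` around `x` in `G` is rooted-isomorphic to `(F, y)`. -/
def RootedBallIso (G : SimpleGraph V) (x : V) (R : ℕ) (F : SimpleGraph W) (y : W) : Prop :=
  ∃ e : (G.induce (ballSet G x R)) ≃g F, e ⟨x, self_mem_ballSet G x R⟩ = y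

/-- The number of vertices of `G` whose `R`-ball is rooted-isomorphic to `(F,y)`;
`p(R, F, U(G))` is this number divided by the number of vertices of `G`. -/
def nbhdCount {n : ℕ} (G : SimpleGraph (Fin n)) (R : ℕ) {k : ℕ}
    (F : SimpleGraph (Fin k)) (y : Fin k) : ℕ :=
  Nat.card {v : Fin n // RootedBallIso G v R F y}

/-- A finite rooted tree (on a vertex set `Fin n`). -/
structure FRT where
  n : ℕ
  G : SimpleGraph (Fin n)
  root : Fin n
  isTree : G.IsTree

/-- The depth of a finite rooted tree: the largest distance from the root. -/
def FRT.depth (A : FRT) : ℕ := Finset.univ.sup fun v => A.G.dist A.root v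

/-- `t_i`: the number of vertices at distance `i` from the root. -/
def FRT.sphere (A : FRT) (i : ℕ) : ℕ := Nat.card {v : Fin A.n // A.G.dist A.root v = i}

/-- The number of root-preserving automorphisms, `|Aut(T_x^l)|`. -/
def FRT.autCard (A : FRT) : ℕ := Nat.card {e : A.G ≃g A.G // e A.root = A.root}

/-- Rooted isomorphism of finite rooted trees. -/
def FRT.isoRel (A B : FRT) : Prop := ∃ e : A.G ≃g B.G, e A.root = B.root

/-- `p(T_x^l) = t_l · ∏_{i ∉ T_l} P0(d_i)·(d_i−1)! / |Aut(T_x^l)|`. -/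
def FRT.p (P0 : ℕ → ℝ≥0∞) (l : ℕ) (A : FRT) : ℝ≥0∞ :=
  (A.sphere l : ℝ≥0∞) *
    (∏ᶠ v ∈ {v : Fin A.n | A.G.dist A.root v ≠ l},
      P0 (gdeg A.G v) * ((gdeg A.G v - 1).factorial : ℝ≥0∞)) / (A.autCard : ℝ≥0∞)


theorem perm_extend' : ∀ (k : ℕ) (g : Fin k → ℕ), Function.Injective g →
    ∃ σ : Equiv.Perm ℕ, {i | σ i ≠ i}.Finite ∧ ∀ j : Fin k, σ j = g j := by
  intro k
  induction k with
  | zero => exact fun g _ => ⟨1, by simp, fun j => j.elim0⟩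
  | succ k ih =>
    intro g hg
    obtain ⟨σ, hσfin, hσ⟩ := ih (g ∘ Fin.castSucc) (hg.comp (Fin.castSucc_injective k))
    refine ⟨σ * Equiv.swap (σ.symm (g (Fin.last k))) k, ?_, ?_⟩
    · apply Set.Finite.subset (hσfin.union ((Set.finite_singleton k).insert (σ.symm (g (Fin.last k)))))
      intro i hi
      simp only [Set.mem_setOf_eq, Equiv.Perm.mul_apply] at hi
      by_cases h1 : Equiv.swap (σ.symm (g (Fin.last k))) k i = i
      · left; rw [h1] at hi; exact hi
      · right
        rcases Equiv.swap_apply_ne_self_iff.mp h1 with ⟨_, h | h⟩ <;> simp [h]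
    · intro j
      rcases Fin.eq_castSucc_or_eq_last j with ⟨j', rfl⟩ | rfl
      · have hne : ((j'.castSucc : Fin (k+1)) : ℕ) ≠ σ.symm (g (Fin.last k)) := by
          intro h
          have h2 : σ (j'.castSucc : ℕ) = g (Fin.last k) := by rw [h, Equiv.apply_symm_apply]
          rw [Fin.coe_castSucc, hσ j'] at h2
          have := hg h2
          simp only [Function.comp_apply] at h2
          exact absurd (hg h2) (by simp [Fin.ext_iff]; omega)
        have hne2 : ((j'.castSucc : Fin (k+1)) : ℕ) ≠ (k : ℕ) := by
          simp [Fin.coe_castSucc]; omega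
        simp only [Equiv.Perm.mul_apply, Equiv.swap_apply_of_ne_of_ne hne hne2]
        rw [Fin.coe_castSucc, hσ j']; rfl
      · simp only [Equiv.Perm.mul_apply, Fin.val_last, Equiv.swap_apply_right,
          Equiv.apply_symm_apply]

section AuxCore
variable {Ω : Type*} [MeasurableSpace Ω] {μ : Measure Ω} [IsProbabilityMeasure μ]


theorem core' (A : Set Ω) (hA : MeasurableSet A) (B : ℕ → Set Ω) (hB : ∀ m, MeasurableSet (B m))
    (hBp : ∀ m, μ (B m) = μ (B 0))
    (hBpair : ∀ m m', m ≠ m' → μ (B m ∩ B m') = μ (B 0) * μ (B 0))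
    (hAB : ∀ m, μ (A ∩ B m) = μ (A ∩ B 0)) :
    μ (A ∩ B 0) = μ A * μ (B 0) := by
  classical
  set p : ℝ := (μ (B 0)).toReal with hp
  set a : ℝ := (μ A).toReal with ha
  set c : ℝ := (μ (A ∩ B 0)).toReal - a * p with hc
  have hp0 : 0 ≤ p := ENNReal.toReal_nonneg
  have hmul : ∀ (s t : Set Ω) (ω : Ω), (s ∩ t).indicator (1:Ω→ℝ) ω
      = s.indicator 1 ω * t.indicator 1 ω := by
    intro s t ω; rw [Set.inter_indicator_one]; rfl
  have habs : ∀ (s : Set Ω) (ω : Ω), |s.indicator (1:Ω→ℝ) ω| ≤ 1 := by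
    intro s ω
    by_cases h : ω ∈ s
    · rw [Set.indicator_of_mem h]; norm_num
    · rw [Set.indicator_of_notMem h]; norm_num
  have hind : ∀ s : Set Ω, MeasurableSet s → Integrable (s.indicator (1:Ω→ℝ)) μ :=
    fun s hs => (integrable_const 1).indicator hs
  have hest : ∀ n : ℕ, 1 ≤ n → |c| ≤ (1 + p) / Real.sqrt n := by
    intro n hn
    have hn1 : (1:ℝ) ≤ (n:ℝ) := by exact_mod_cast hn
    have hsq : (0:ℝ) < Real.sqrt n := Real.sqrt_pos.mpr (by linarith)
    have hsqsq : Real.sqrt n * Real.sqrt n = (n:ℝ) := Real.mul_self_sqrt (by linarith)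
    have hSint : Integrable (fun ω => ∑ m ∈ Finset.range n, (B m).indicator (1:Ω→ℝ) ω) μ :=
      integrable_finset_sum _ fun m _ => hind _ (hB m)
    have hSI : ∫ ω, (∑ m ∈ Finset.range n, (B m).indicator (1:Ω→ℝ) ω) ∂μ = n * p := by
      rw [integral_finset_sum _ fun m _ => hind _ (hB m)]
      have h1 : ∀ m ∈ Finset.range n, ∫ ω, (B m).indicator (1:Ω→ℝ) ω ∂μ = p := by
        intro m _; rw [integral_indicator_one (hB m), measureReal_def, hBp m]
      rw [Finset.sum_congr rfl h1, Finset.sum_const, Finset.card_range, nsmul_eq_mul]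
    have hSSint : Integrable (fun ω => ∑ m ∈ Finset.range n, ∑ m' ∈ Finset.range n,
        (B m ∩ B m').indicator (1:Ω→ℝ) ω) μ :=
      integrable_finset_sum _ fun m _ => integrable_finset_sum _ fun m' _ =>
        hind _ ((hB m).inter (hB m'))
    have hSSI : ∫ ω, (∑ m ∈ Finset.range n, ∑ m' ∈ Finset.range n,
        (B m ∩ B m').indicator (1:Ω→ℝ) ω) ∂μ = n * p + ((n:ℝ)^2 - n) * p^2 := by
      rw [integral_finset_sum _ fun m _ => integrable_finset_sum _ fun m' _ =>
        hind _ ((hB m).inter (hB m'))]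
      have h1 : ∀ m ∈ Finset.range n, (∫ ω, (∑ m' ∈ Finset.range n,
          ((B m ∩ B m').indicator (1:Ω→ℝ)) ω) ∂μ) = p + ((n:ℝ) - 1) * p^2 := by
        intro m hm
        rw [integral_finset_sum _ fun m' _ => hind _ ((hB m).inter (hB m'))]
        have h2 : ∀ m' ∈ Finset.range n, (∫ ω, ((B m ∩ B m').indicator (1:Ω→ℝ)) ω ∂μ)
            = p^2 + (if m' = m then p - p^2 else 0) := by
          intro m' _
          rw [integral_indicator_one ((hB m).inter (hB m'))]
          by_cases h : m' = m
          · subst h; rw [Set.inter_self, measureReal_def, hBp m', if_pos rfl]; ring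
          · rw [measureReal_def, hBpair m m' (fun hh => h hh.symm), if_neg h, ENNReal.toReal_mul, ← hp]; ring
        rw [Finset.sum_congr rfl h2, Finset.sum_add_distrib, Finset.sum_const,
          Finset.card_range, Finset.sum_ite_eq' (Finset.range n) m (fun _ => p - p^2),
          if_pos hm, nsmul_eq_mul]
        ring
      rw [Finset.sum_congr rfl h1, Finset.sum_const, Finset.card_range, nsmul_eq_mul]
      ring
    -- Z squared
    have hSSeq : ∀ ω : Ω, (∑ m ∈ Finset.range n, (B m).indicator (1:Ω→ℝ) ω)
        * (∑ m ∈ Finset.range n, (B m).indicator (1:Ω→ℝ) ω)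
        = ∑ m ∈ Finset.range n, ∑ m' ∈ Finset.range n, (B m ∩ B m').indicator (1:Ω→ℝ) ω := by
      intro ω
      rw [Finset.sum_mul_sum]
      exact Finset.sum_congr rfl fun m _ => Finset.sum_congr rfl fun m' _ => (hmul _ _ ω).symm
    have hZeq : (fun ω => ((∑ m ∈ Finset.range n, (B m).indicator (1:Ω→ℝ) ω) - n * p)^2)
        = fun ω => ((∑ m ∈ Finset.range n, ∑ m' ∈ Finset.range n,
            (B m ∩ B m').indicator (1:Ω→ℝ) ω)
          - (2 * ((n:ℝ) * p)) * (∑ m ∈ Finset.range n, (B m).indicator (1:Ω→ℝ) ω))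
          + ((n:ℝ) * p)^2 := by
      funext ω; rw [← hSSeq ω]; ring
    have hZsqint : Integrable (fun ω =>
        ((∑ m ∈ Finset.range n, (B m).indicator (1:Ω→ℝ) ω) - n * p)^2) μ := by
      rw [hZeq]
      exact (hSSint.sub (hSint.const_mul _)).add (integrable_const _)
    have hZsqI : ∫ ω, ((∑ m ∈ Finset.range n, (B m).indicator (1:Ω→ℝ) ω) - n * p)^2 ∂μ
        = n * p - n * p^2 := by
      have i2 : Integrable (fun ω => (2 * ((n:ℝ) * p))
          * (∑ m ∈ Finset.range n, (B m).indicator (1:Ω→ℝ) ω)) μ := hSint.const_mul _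
      have i1 : Integrable (fun ω => (∑ m ∈ Finset.range n, ∑ m' ∈ Finset.range n,
          (B m ∩ B m').indicator (1:Ω→ℝ) ω)
          - (2 * ((n:ℝ) * p)) * (∑ m ∈ Finset.range n, (B m).indicator (1:Ω→ℝ) ω)) μ :=
        hSSint.sub i2
      rw [hZeq, integral_add i1 (integrable_const _), integral_sub hSSint i2,
        integral_const_mul, hSSI, hSI, integral_const]
      simp only [measureReal_def, measure_univ, ENNReal.toReal_one, smul_eq_mul, one_mul]
      ring
    -- 1_A * Z
    have hAZeq : (fun ω => A.indicator (1:Ω→ℝ) ω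
          * ((∑ m ∈ Finset.range n, (B m).indicator (1:Ω→ℝ) ω) - n * p))
        = fun ω => (∑ m ∈ Finset.range n, (A ∩ B m).indicator (1:Ω→ℝ) ω)
          - ((n:ℝ) * p) * A.indicator (1:Ω→ℝ) ω := by
      funext ω
      simp only [hmul, Finset.mul_sum]
      rw [← Finset.mul_sum]
      ring
    have hAZint : Integrable (fun ω => A.indicator (1:Ω→ℝ) ω
        * ((∑ m ∈ Finset.range n, (B m).indicator (1:Ω→ℝ) ω) - n * p)) μ := by
      rw [hAZeq]
      exact (integrable_finset_sum _ fun m _ => hind _ (hA.inter (hB m))).sub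
        ((hind _ hA).const_mul _)
    have hAZI : ∫ ω, A.indicator (1:Ω→ℝ) ω
        * ((∑ m ∈ Finset.range n, (B m).indicator (1:Ω→ℝ) ω) - n * p) ∂μ = n * c := by
      have i3 : Integrable (fun ω => ((n:ℝ) * p) * A.indicator (1:Ω→ℝ) ω) μ :=
        (hind _ hA).const_mul _
      rw [hAZeq, integral_sub (integrable_finset_sum _ fun m _ => hind _ (hA.inter (hB m))) i3,
        integral_finset_sum _ fun m _ => hind _ (hA.inter (hB m)),
        integral_const_mul, integral_indicator_one hA, measureReal_def]
      have h1 : ∀ m ∈ Finset.range n, ∫ ω, ((A ∩ B m).indicator (1:Ω→ℝ)) ω ∂μ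
          = (μ (A ∩ B 0)).toReal := by
        intro m _; rw [integral_indicator_one (hA.inter (hB m)), measureReal_def, hAB m]
      rw [Finset.sum_congr rfl h1, Finset.sum_const, Finset.card_range, nsmul_eq_mul, hc, ← ha]
      ring
    -- pointwise bound
    have hptw : ∀ ω : Ω, |A.indicator (1:Ω→ℝ) ω
          * ((∑ m ∈ Finset.range n, (B m).indicator (1:Ω→ℝ) ω) - n * p)|
        ≤ Real.sqrt n + ((∑ m ∈ Finset.range n, (B m).indicator (1:Ω→ℝ) ω) - n * p)^2
            / Real.sqrt n := by
      intro ω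
      set z : ℝ := (∑ m ∈ Finset.range n, (B m).indicator (1:Ω→ℝ) ω) - n * p with hz
      have h1 : |A.indicator (1:Ω→ℝ) ω * z| ≤ |z| := by
        rw [abs_mul]
        exact mul_le_of_le_one_left (abs_nonneg _) (habs A ω)
      have key : |z| * Real.sqrt n ≤ Real.sqrt n * Real.sqrt n + z^2 := by
        nlinarith [sq_nonneg (Real.sqrt n - |z|), sq_abs z, abs_nonneg z]
      have h3 : Real.sqrt n + z^2 / Real.sqrt n
          = (Real.sqrt n * Real.sqrt n + z^2) / Real.sqrt n := by
        field_simp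
      rw [h3, le_div_iff₀ hsq] at *
      calc |A.indicator (1:Ω→ℝ) ω * z| * Real.sqrt n ≤ |z| * Real.sqrt n := by
            apply mul_le_mul_of_nonneg_right h1 (le_of_lt hsq)
        _ ≤ _ := key
    -- combine
    have hintbd : |∫ ω, A.indicator (1:Ω→ℝ) ω
        * ((∑ m ∈ Finset.range n, (B m).indicator (1:Ω→ℝ) ω) - n * p) ∂μ|
        ≤ Real.sqrt n + (n * p - n * p^2) / Real.sqrt n := by
      calc |∫ ω, A.indicator (1:Ω→ℝ) ω
            * ((∑ m ∈ Finset.range n, (B m).indicator (1:Ω→ℝ) ω) - n * p) ∂μ|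
          ≤ ∫ ω, |A.indicator (1:Ω→ℝ) ω
            * ((∑ m ∈ Finset.range n, (B m).indicator (1:Ω→ℝ) ω) - n * p)| ∂μ :=
            by
              rw [← Real.norm_eq_abs]
              refine le_trans (norm_integral_le_integral_norm _) (le_of_eq ?_)
              simp only [Real.norm_eq_abs]
        _ ≤ ∫ ω, (Real.sqrt n + ((∑ m ∈ Finset.range n, (B m).indicator (1:Ω→ℝ) ω)
              - n * p)^2 / Real.sqrt n) ∂μ := by
            apply integral_mono hAZint.abs ((integrable_const _).add (hZsqint.div_const _)) hptw
        _ = Real.sqrt n + (n * p - n * p^2) / Real.sqrt n := by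
            rw [integral_add (integrable_const _) (hZsqint.div_const _), integral_const,
              integral_div, hZsqI]
            simp [measure_univ]
    rw [hAZI] at hintbd
    have hn0 : (0:ℝ) < n := by linarith
    have hnc : |(n:ℝ) * c| = n * |c| := by
      rw [abs_mul, abs_of_pos hn0]
    rw [hnc] at hintbd
    have hb2 : (n:ℝ) * |c| ≤ Real.sqrt n * (1 + p) := by
      have h4 : ((n:ℝ) * p - n * p^2) / Real.sqrt n ≤ ((n:ℝ) * p) / Real.sqrt n := by
        have hnn : (0:ℝ) ≤ (n:ℝ) * p^2 := by positivity
        gcongr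
        linarith
      have h5 : ((n:ℝ) * p) / Real.sqrt n = Real.sqrt n * p := by
        rw [div_eq_iff (ne_of_gt hsq)]
        linear_combination (-p) * hsqsq
      calc (n:ℝ) * |c| ≤ Real.sqrt n + (n * p - n * p^2) / Real.sqrt n := hintbd
        _ ≤ Real.sqrt n + (n * p) / Real.sqrt n := by linarith
        _ = Real.sqrt n * (1 + p) := by rw [h5]; ring
    rw [le_div_iff₀ hsq]
    nlinarith [hb2, hsqsq, hsq, abs_nonneg c]
  -- conclude c = 0
  have hc0 : c = 0 := by
    rw [← abs_eq_zero]
    by_contra h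
    have habs0 : 0 < |c| := lt_of_le_of_ne (abs_nonneg c) (Ne.symm h)
    obtain ⟨n, hn⟩ := exists_nat_gt (max 1 (((1 + p) / |c|)^2))
    have hn1 : 1 ≤ n := by
      have := le_max_left (1:ℝ) (((1 + p) / |c|)^2)
      have : (1:ℝ) < n := lt_of_le_of_lt this hn
      exact_mod_cast Nat.one_le_iff_ne_zero.mpr (by rintro rfl; norm_num at this)
    have hb := hest n hn1
    have hlt : ((1 + p) / |c|)^2 < (n:ℝ) := lt_of_le_of_lt (le_max_right _ _) hn
    have hq0 : 0 ≤ (1 + p) / |c| := div_nonneg (by linarith) (le_of_lt habs0)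
    have hsqn : (1 + p) / |c| < Real.sqrt n := by
      rw [show ((1:ℝ) + p) / |c| = Real.sqrt (((1 + p) / |c|)^2) from (Real.sqrt_sq hq0).symm]
      exact Real.sqrt_lt_sqrt (sq_nonneg _) hlt
    have hsq : (0:ℝ) < Real.sqrt n := lt_of_le_of_lt hq0 hsqn
    have : (1 + p) / Real.sqrt n < |c| := by
      rw [div_lt_iff₀ hsq]
      calc (1:ℝ) + p = ((1 + p) / |c|) * |c| := by field_simp
        _ < Real.sqrt n * |c| := by
            apply mul_lt_mul_of_pos_right hsqn habs0
        _ = |c| * Real.sqrt n := by ring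
    linarith
  have hreal : (μ (A ∩ B 0)).toReal = ((μ A) * (μ (B 0))).toReal := by
    rw [ENNReal.toReal_mul, ← ha, ← hp]
    have := hc0
    rw [hc] at this
    linarith
  exact (ENNReal.toReal_eq_toReal_iff' (measure_ne_top μ _)
    (ENNReal.mul_ne_top (measure_ne_top μ _) (measure_ne_top μ _))).mp hreal

end AuxCore

/-- An infinite exchangeable sequence of `ℕ`-valued random variables in
which the first two coordinates are uncorrelated events (`P(X₁=i, X₂=i) = P(X₁=i)·P(X₂=i)`
for all `i`) is i.i.d. -/
theorem exchangeable_degenerate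
    (Ω : Type*) [MeasureSpace Ω] [IsProbabilityMeasure (ℙ : Measure Ω)]
    (X : Ω → ℕ → ℕ) (hmeas : ∀ i, Measurable fun ω => X ω i)
    (hexch : ∀ (σ : Equiv.Perm ℕ), {i | σ i ≠ i}.Finite →
      ∀ (k : ℕ) (d : Fin k → ℕ),
        ℙ {ω | ∀ i : Fin k, X ω (σ i) = d i} = ℙ {ω | ∀ i : Fin k, X ω i = d i})
    (hind : ∀ i : ℕ, ℙ {ω | X ω 0 = i ∧ X ω 1 = i} =
      ℙ {ω | X ω 0 = i} * ℙ {ω | X ω 1 = i}) :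
    iIndepFun (fun i ω => X ω i) ℙ ∧
      ∀ i : ℕ, IdentDistrib (fun ω => X ω i) (fun ω => X ω 0) ℙ ℙ := by
  classical
  have hBmeas : ∀ m i, MeasurableSet {ω | X ω m = i} :=
    fun m i => hmeas m (measurableSet_singleton i)
  -- identical distribution of coordinates
  have ident : ∀ m i, ℙ {ω | X ω m = i} = ℙ {ω | X ω 0 = i} := by
    intro m i
    obtain ⟨σ, hfin, hσ⟩ := perm_extend' 1 (fun _ => m)
      (fun x y _ => Subsingleton.elim x y)
    have h := hexch σ hfin 1 (fun _ => i)
    have e1 : {ω | ∀ j : Fin 1, X ω (σ j) = i} = {ω | X ω m = i} := by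
      ext ω
      simp only [Set.mem_setOf_eq, Fin.forall_fin_one]
      rw [hσ 0]
    have e2 : {ω | ∀ j : Fin 1, X ω (j : ℕ) = i} = {ω | X ω 0 = i} := by
      ext ω
      simp only [Set.mem_setOf_eq, Fin.forall_fin_one]
      rfl
    rw [e1, e2] at h
    exact h
  -- pairwise product formula
  have pair : ∀ m m' i, m ≠ m' →
      ℙ ({ω | X ω m = i} ∩ {ω | X ω m' = i})
        = ℙ {ω | X ω 0 = i} * ℙ {ω | X ω 0 = i} := by
    intro m m' i hmm'
    have hginj : Function.Injective (fun j : Fin 2 => if j = 0 then m else m') := by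
      intro x y hxy
      fin_cases x <;> fin_cases y
      · rfl
      · exact absurd (show m = m' by simpa using hxy) hmm'
      · exact absurd (show m' = m by simpa using hxy) (fun h => hmm' h.symm)
      · rfl
    obtain ⟨σ, hfin, hσ⟩ := perm_extend' 2 _ hginj
    have h := hexch σ hfin 2 (fun _ => i)
    have h0 : σ (((0 : Fin 2) : ℕ)) = m := by have := hσ 0; simpa using this
    have h1 : σ (((1 : Fin 2) : ℕ)) = m' := by have := hσ 1; simpa using this
    have e1 : {ω | ∀ j : Fin 2, X ω (σ j) = i}
        = {ω | X ω m = i} ∩ {ω | X ω m' = i} := by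
      ext ω
      simp only [Set.mem_setOf_eq, Fin.forall_fin_two, Set.mem_inter_iff]
      rw [h0, h1]
    have e2 : {ω | ∀ j : Fin 2, X ω (j : ℕ) = i} = {ω | X ω 0 = i ∧ X ω 1 = i} := by
      ext ω
      simp only [Set.mem_setOf_eq, Fin.forall_fin_two]
      rfl
    rw [e1, e2] at h
    rw [h, hind i, ident 1 i]
  -- cylinder formula on initial segments
  have cyl : ∀ (k : ℕ) (d : Fin k → ℕ),
      ℙ {ω | ∀ j : Fin k, X ω (j : ℕ) = d j} = ∏ j, ℙ {ω | X ω 0 = d j} := by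
    intro k
    induction k with
    | zero =>
      intro d
      have : {ω : Ω | ∀ j : Fin 0, X ω (j : ℕ) = d j} = Set.univ := by
        ext ω; simp
      rw [this]
      simp
    | succ k ih =>
      intro d
      set A := {ω | ∀ j : Fin k, X ω (j : ℕ) = d j.castSucc} with hAdef
      have hAmeas : MeasurableSet A := by
        have : A = ⋂ j : Fin k, {ω | X ω (j : ℕ) = d j.castSucc} := by
          ext ω; simp [hAdef, Set.mem_iInter]
        rw [this]
        exact MeasurableSet.iInter fun j => hBmeas _ _
      set i := d (Fin.last k) with hidef
      have hsplit : {ω | ∀ j : Fin (k+1), X ω (j : ℕ) = d j}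
          = A ∩ {ω | X ω (k + 0) = i} := by
        ext ω
        constructor
        · intro h
          refine ⟨fun j => ?_, ?_⟩
          · have := h j.castSucc
            rwa [Fin.coe_castSucc] at this
          · have := h (Fin.last k)
            simpa using this
        · rintro ⟨h1, h2⟩ j
          rcases Fin.eq_castSucc_or_eq_last j with ⟨j', rfl⟩ | rfl
          · rw [Fin.coe_castSucc]
            exact h1 j'
          · simpa using h2
      have hAB : ∀ m, ℙ (A ∩ {ω | X ω (k + m) = i}) = ℙ (A ∩ {ω | X ω (k + 0) = i}) := by
        intro m
        rcases Nat.eq_zero_or_pos m with rfl | hm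
        · rfl
        · have hkm : k < k + m := by omega
          have hfin : {x | Equiv.swap k (k+m) x ≠ x}.Finite := by
            apply Set.Finite.subset ((Set.finite_singleton (k+m)).insert k)
            intro x hx
            rcases Equiv.swap_apply_ne_self_iff.mp hx with ⟨_, h | h⟩ <;> simp [h]
          have h := hexch (Equiv.swap k (k+m)) hfin (k+1) d
          have e1 : {ω | ∀ j : Fin (k+1), X ω (Equiv.swap k (k+m) (j : ℕ)) = d j}
              = A ∩ {ω | X ω (k + m) = i} := by
            ext ω
            constructor
            · intro h'
              refine ⟨fun j => ?_, ?_⟩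
              · have := h' j.castSucc
                rwa [Fin.coe_castSucc, Equiv.swap_apply_of_ne_of_ne (by omega) (by omega)]
                  at this
              · have := h' (Fin.last k)
                rwa [Fin.val_last, Equiv.swap_apply_left] at this
            · rintro ⟨h1, h2⟩ j
              rcases Fin.eq_castSucc_or_eq_last j with ⟨j', rfl⟩ | rfl
              · rw [Fin.coe_castSucc, Equiv.swap_apply_of_ne_of_ne (by omega) (by omega)]
                exact h1 j'
              · rw [Fin.val_last, Equiv.swap_apply_left]
                exact h2
          rw [e1, hsplit] at h
          exact h
      have := core' A hAmeas (fun m => {ω | X ω (k + m) = i}) (fun m => hBmeas _ _)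
        (fun m => by rw [ident (k+m) i, ident (k+0) i])
        (fun m m' hne => by
          rw [pair (k+m) (k+m') i (by omega), ident (k+0) i])
        hAB
      rw [hsplit, this, ih (fun j => d j.castSucc), Fin.prod_univ_castSucc, ident (k+0) i]
  -- general product formula along any injection
  have prodform : ∀ (k : ℕ) (g : Fin k → ℕ), Function.Injective g → ∀ d : Fin k → ℕ,
      ℙ {ω | ∀ j : Fin k, X ω (g j) = d j} = ∏ j, ℙ {ω | X ω 0 = d j} := by
    intro k g hg d
    obtain ⟨σ, hfin, hσ⟩ := perm_extend' k g hg
    have h := hexch σ hfin k d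
    have e1 : {ω | ∀ j : Fin k, X ω (σ (j : ℕ)) = d j}
        = {ω | ∀ j : Fin k, X ω (g j) = d j} := by
      ext ω
      simp only [Set.mem_setOf_eq, hσ]
    rw [e1] at h
    rw [h, cyl k d]
  constructor
  · -- independence
    rw [ProbabilityTheory.iIndepFun_iff_iIndep]
    have hgen : ∀ i : ℕ, MeasurableSpace.comap (fun ω => X ω i) inferInstance
        = MeasurableSpace.generateFrom
            {s : Set Ω | ∃ a : ℕ, s = (fun ω => X ω i) ⁻¹' {a}} := by
      intro i
      have hnat : (inferInstance : MeasurableSpace ℕ)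
          = MeasurableSpace.generateFrom {s : Set ℕ | ∃ a : ℕ, s = {a}} := by
        apply le_antisymm
        · intro s _
          rw [show s = ⋃ a ∈ s, ({a} : Set ℕ) from (Set.biUnion_of_singleton s).symm]
          exact MeasurableSet.biUnion (Set.to_countable s)
            (fun b _ => MeasurableSpace.measurableSet_generateFrom ⟨b, rfl⟩)
        · refine MeasurableSpace.generateFrom_le ?_
          rintro s ⟨a, rfl⟩
          exact measurableSet_singleton a
      rw [hnat, MeasurableSpace.comap_generateFrom]
      congr 1
      ext s
      constructor
      · rintro ⟨t, ⟨a, rfl⟩, rfl⟩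
        exact ⟨a, rfl⟩
      · rintro ⟨a, rfl⟩
        exact ⟨{a}, ⟨a, rfl⟩, rfl⟩
    apply ProbabilityTheory.iIndepSets.iIndep
      (π := fun i => {s : Set Ω | ∃ a : ℕ, s = (fun ω => X ω i) ⁻¹' {a}})
    · intro i
      exact (hmeas i).comap_le
    · intro i
      rintro s ⟨a, rfl⟩ t ⟨b, rfl⟩ hne
      obtain ⟨ω, hωa, hωb⟩ := hne
      have hab : a = b := by
        have h1 : X ω i = a := hωa
        have h2 : X ω i = b := hωb
        rw [← h1, h2]
      subst hab
      exact ⟨a, by rw [Set.inter_self]⟩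
    · exact hgen
    · rw [ProbabilityTheory.iIndepSets_iff]
      intro S sets hsets
      have hex : ∀ i ∈ S, ∃ a : ℕ, sets i = (fun ω => X ω i) ⁻¹' {a} := hsets
      choose! v hv using hex
      set k := S.card with hk
      set g : Fin k → ℕ := fun j => S.orderEmbOfFin rfl j with hg
      have hgmem : ∀ j, g j ∈ S := fun j => S.orderEmbOfFin_mem rfl j
      have hgsurj : ∀ i ∈ S, ∃ j, g j = i := by
        intro i hi
        have := Finset.range_orderEmbOfFin S (rfl : S.card = k)
        have : i ∈ Set.range (S.orderEmbOfFin rfl) := by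
          rw [this]; exact hi
        obtain ⟨j, hj⟩ := this
        exact ⟨j, hj⟩
      have hginj : Function.Injective g := (S.orderEmbOfFin rfl).injective
      have e1 : (⋂ i ∈ S, sets i) = {ω | ∀ j : Fin k, X ω (g j) = v (g j)} := by
        ext ω
        simp only [Set.mem_iInter, Set.mem_setOf_eq]
        constructor
        · intro h j
          have := h (g j) (hgmem j)
          rw [hv (g j) (hgmem j)] at this
          exact this
        · intro h i hi
          obtain ⟨j, rfl⟩ := hgsurj i hi
          rw [hv (g j) (hgmem j)]
          exact h j
      rw [e1, prodform k g hginj (fun j => v (g j))]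
      rw [show (∏ i ∈ S, ℙ (sets i)) = ∏ i ∈ S, ℙ {ω | X ω 0 = v i} from
        Finset.prod_congr rfl fun i hi => by rw [hv i hi, ← ident i (v i)]; rfl]
      exact Finset.prod_bij (fun j _ => g j) (fun j _ => hgmem j)
        (fun j _ j' _ h => hginj h) (fun i hi => by
          obtain ⟨j, rfl⟩ := hgsurj i hi
          exact ⟨j, Finset.mem_univ j, rfl⟩) (fun j _ => rfl)
  · -- identically distributed
    intro i
    refine ⟨(hmeas i).aemeasurable, (hmeas 0).aemeasurable, ?_⟩
    apply MeasureTheory.Measure.ext_of_singleton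
    intro a
    rw [Measure.map_apply (hmeas i) (measurableSet_singleton a),
      Measure.map_apply (hmeas 0) (measurableSet_singleton a)]
    exact ident i a

end RTrees
end
end

section
/- Let G be a labeled tree on n vertices and let T_x^l be a finite l-deep rooted tree, l ≥ 1. Let T' be the numbered tree obtained from T_x^l by deleting all vertices at distance l from the root, with remainder degrees r'_i equal to the number of depth-l neighbors of i in T_x^l for i ∈ T_{l−1}, and r'_i = 0 for all other vertices of T'. Then n · p(l, T_x^l, U(G)) · |Aut(T_x^l)| = (number of injective labeled homomorphisms from (T', r') to G) · ∏_{i ∈ T_{l−1}} c_i!, where c_i is the number of depth-l children of i in T_x^l. -/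
open MeasureTheory ProbabilityTheory Filter Function
open scoped ENNReal ProbabilityTheory Topology

noncomputable section

namespace RTrees

variable {V W : Type*}

/-! ### Auxiliary general lemmas -/

open SimpleGraph

section TreeLemmas

variable {α : Type*} {H : SimpleGraph α}

lemma tree_path_len (hH : H.IsTree) {a b : α} (p : H.Walk a b) (hp : p.IsPath) :
    p.length = H.dist a b := by
  obtain ⟨q, hq, hql⟩ := hH.isConnected.exists_path_of_dist a b
  rw [(hH.existsUnique_path a b).unique hp hq, hql]

lemma tree_adj_dist (hH : H.IsTree) {x a b : α} (hab : H.Adj a b) :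
    H.dist x b = H.dist x a + 1 ∨ H.dist x a = H.dist x b + 1 := by
  classical
  have e1 : H.dist a x = H.dist x a := SimpleGraph.dist_comm
  have e2 : H.dist b x = H.dist x b := SimpleGraph.dist_comm
  obtain ⟨p, hp, hpl⟩ := hH.isConnected.exists_path_of_dist a x
  by_cases hb : b ∈ p.support
  · right
    have ht : (p.takeUntil b hb).length = H.dist a b := tree_path_len hH _ (hp.takeUntil hb)
    have hd : (p.dropUntil b hb).length = H.dist b x := tree_path_len hH _ (hp.dropUntil hb)
    have hab1 : H.dist a b = 1 := (dist_eq_one_iff_adj (G := H)).2 hab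
    have hsum := congrArg Walk.length (p.take_spec hb)
    rw [Walk.length_append, ht, hd, hpl] at hsum
    omega
  · left
    have hc : (Walk.cons hab.symm p).IsPath := hp.cons hb
    have h2 := tree_path_len hH _ hc
    rw [Walk.length_cons, hpl] at h2
    omega

lemma exists_parent (hH : H.IsTree) {x w : α} (hd : 0 < H.dist x w) :
    ∃ u, H.Adj w u ∧ H.dist x u + 1 = H.dist x w := by
  have e2 : H.dist w x = H.dist x w := SimpleGraph.dist_comm
  obtain ⟨p, hp, hpl⟩ := hH.isConnected.exists_path_of_dist w x
  cases p with
  | nil => simp [SimpleGraph.Walk.length_nil] at hpl; simp at hd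
  | cons h q =>
    rename_i u
    refine ⟨u, h, ?_⟩
    have e3 : H.dist u x = H.dist x u := SimpleGraph.dist_comm
    have h2 := tree_path_len hH _ hp.of_cons
    rw [Walk.length_cons, h2] at hpl
    omega

lemma unique_parent (hH : H.IsTree) {x a b w : α} (ha : H.Adj w a) (hb : H.Adj w b)
    (hda : H.dist x a + 1 = H.dist x w) (hdb : H.dist x b + 1 = H.dist x w) : a = b := by
  classical
  have e1 : H.dist a x = H.dist x a := SimpleGraph.dist_comm
  have e2 : H.dist b x = H.dist x b := SimpleGraph.dist_comm
  have e3 : H.dist w x = H.dist x w := SimpleGraph.dist_comm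
  obtain ⟨p, hp, hpl⟩ := hH.isConnected.exists_path_of_dist a x
  obtain ⟨q, hq, hql⟩ := hH.isConnected.exists_path_of_dist b x
  have hwp : w ∉ p.support := by
    intro hw
    have h4 := tree_path_len hH _ (hp.dropUntil hw)
    have hle := Walk.length_dropUntil_le p hw
    rw [h4, hpl] at hle
    omega
  have hwq : w ∉ q.support := by
    intro hw
    have h4 := tree_path_len hH _ (hq.dropUntil hw)
    have hle := Walk.length_dropUntil_le q hw
    rw [h4, hql] at hle
    omega
  have hP : (Walk.cons ha p).IsPath := hp.cons hwp
  have hQ : (Walk.cons hb q).IsPath := hq.cons hwq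
  have heq := (hH.existsUnique_path w x).unique hP hQ
  have hs := congrArg Walk.support heq
  rw [Walk.support_cons, Walk.support_cons, p.support_eq_cons, q.support_eq_cons] at hs
  simp only [List.cons.injEq] at hs
  exact hs.2.1

lemma hom_dist_le {β : Type*} {K : SimpleGraph β} (f : H →g K) {x y : α}
    (h : H.Reachable x y) : K.dist (f x) (f y) ≤ H.dist x y := by
  obtain ⟨p, hp⟩ := h.exists_walk_length_eq_dist
  calc K.dist (f x) (f y) ≤ (p.map f).length := SimpleGraph.dist_le _
    _ = H.dist x y := by rw [Walk.length_map, hp]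

lemma iso_dist {β : Type*} {K : SimpleGraph β} (f : H ≃g K) (x y : α) :
    K.dist (f x) (f y) = H.dist x y := by
  by_cases h : H.Reachable x y
  · refine le_antisymm (hom_dist_le f.toHom h) ?_
    have h2 : K.Reachable (f x) (f y) := h.map f.toHom
    have := hom_dist_le f.symm.toHom h2
    simpa using this
  · have h2 : ¬ K.Reachable (f x) (f y) := by
      intro h2
      have := h2.map f.symm.toHom
      exact h (by simpa using this)
    rw [SimpleGraph.dist_eq_zero_of_not_reachable h,
      SimpleGraph.dist_eq_zero_of_not_reachable h2]

lemma gdeg_eq_natCard {β : Type*} (K : SimpleGraph β) (u : β) :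
    RTrees.gdeg K u = Nat.card (K.neighborSet u) := (Nat.card_coe_set_eq _).symm

lemma natCard_subtype {β : Type*} (p : β → Prop) :
    Nat.card {x // p x} = Set.ncard {x | p x} := by
  rw [← Nat.card_coe_set_eq]; rfl

lemma iso_gdeg {β γ : Type*} {K : SimpleGraph β} {K' : SimpleGraph γ} (f : K ≃g K') (u : β) :
    RTrees.gdeg K' (f u) = RTrees.gdeg K u := by
  rw [gdeg_eq_natCard, gdeg_eq_natCard]
  exact (Nat.card_congr (f.mapNeighborSet u)).symm

/-- If `f` is injective, adjacency-preserving and degree-preserving at `u`, then the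
image of the neighborhood of `u` is the neighborhood of `f u`. -/
lemma image_nbhd {β γ : Type*} [Finite γ] {K : SimpleGraph β} {K' : SimpleGraph γ}
    {f : β → γ} (hinj : Function.Injective f)
    (hadj : ∀ ⦃a b⦄, K.Adj a b → K'.Adj (f a) (f b)) (u : β)
    (hdeg : RTrees.gdeg K' (f u) = RTrees.gdeg K u) :
    f '' (K.neighborSet u) = K'.neighborSet (f u) := by
  apply Set.eq_of_subset_of_ncard_le
  · rintro w ⟨a, ha, rfl⟩; exact hadj ha
  · rw [Set.ncard_image_of_injective _ hinj]
    exact le_of_eq hdeg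
  · exact Set.toFinite _

lemma my_card_sigma {ι : Type*} [Fintype ι] (f : ι → Type*) [∀ i, Finite (f i)] :
    Nat.card ((i : ι) × f i) = ∑ i, Nat.card (f i) := by
  letI : ∀ i, Fintype (f i) := fun i => Fintype.ofFinite _
  classical
  simp [Nat.card_eq_fintype_card, Fintype.card_sigma]

end TreeLemmas

/-! ### Specific setup -/

section Main

variable {n : ℕ} {G : SimpleGraph (Fin n)} {A : FRT} {l : ℕ}

/-- The vertex set of `T'`. -/
def VlS (A : FRT) (l : ℕ) : Set (Fin A.n) := {v : Fin A.n | A.G.dist A.root v < l}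

/-- The graph `T'`. -/
abbrev TpG (A : FRT) (l : ℕ) : SimpleGraph (VlS A l) := A.G.induce (VlS A l)

/-- Children at depth `l` of a vertex. -/
abbrev ChildT (A : FRT) (l : ℕ) (i : Fin A.n) : Type :=
  {u : Fin A.n // A.G.Adj i u ∧ A.G.dist A.root u = l}

/-- The remainder degrees. -/
def rS (A : FRT) (l : ℕ) : VlS A l → ℕ := fun v => Nat.card (ChildT A l v.1)

/-- Vertices at depth `l-1`. -/
abbrev SphT (A : FRT) (l : ℕ) : Type := {i : Fin A.n // A.G.dist A.root i = l - 1}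

/-- Neighbors of `y` which are not in the range of `φ`. -/
abbrev ExtraT (G : SimpleGraph (Fin n)) (A : FRT) (l : ℕ) (φ : VlS A l → Fin n) (y : Fin n) :
    Type := {w : Fin n // G.Adj y w ∧ w ∉ Set.range φ}

lemma depth_le (hdepth : A.depth = l) (a : Fin A.n) : A.G.dist A.root a ≤ l := by
  rw [← hdepth]; exact Finset.le_sup (Finset.mem_univ a)

lemma root_mem_VlS (hl : 1 ≤ l) : A.root ∈ VlS A l := by
  simp only [VlS, Set.mem_setOf_eq, SimpleGraph.dist_self]; omega

lemma sph_mem_VlS (hl : 1 ≤ l) {i : Fin A.n} (hi : A.G.dist A.root i = l - 1) : i ∈ VlS A l := by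
  simp only [VlS, Set.mem_setOf_eq]; omega

lemma child_not_mem_VlS {u : Fin A.n} (hu : A.G.dist A.root u = l) : u ∉ VlS A l := by
  simp only [VlS, Set.mem_setOf_eq]; omega

lemma rS_eq_zero {u : VlS A l} (hu : A.G.dist A.root u.1 + 1 < l) : rS A l u = 0 := by
  have : IsEmpty (ChildT A l u.1) := by
    constructor
    rintro ⟨x, hadj, hdx⟩
    rcases tree_adj_dist A.isTree (x := A.root) hadj with h | h <;> omega
  exact Nat.card_of_isEmpty

lemma gdeg_split {a : Fin A.n} (ha : a ∈ VlS A l) :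
    gdeg A.G a = gdeg (TpG A l) ⟨a, ha⟩ + rS A l ⟨a, ha⟩ := by
  classical
  have hadj_iff : ∀ (y : VlS A l), (TpG A l).Adj ⟨a, ha⟩ y ↔ A.G.Adj a y.1 := fun y => Iff.rfl
  have himg : Subtype.val '' ((TpG A l).neighborSet ⟨a, ha⟩) =
      {x | A.G.Adj a x ∧ x ∈ VlS A l} := by
    ext x
    constructor
    · rintro ⟨⟨y, hy⟩, hadj, rfl⟩; exact ⟨hadj, hy⟩
    · rintro ⟨hadj, hx⟩; exact ⟨⟨x, hx⟩, hadj, rfl⟩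
  have h1 : gdeg (TpG A l) ⟨a, ha⟩ = ({x | A.G.Adj a x ∧ x ∈ VlS A l} : Set (Fin A.n)).ncard := by
    rw [← himg, Set.ncard_image_of_injective _ Subtype.val_injective]; rfl
  have h2 : rS A l ⟨a, ha⟩ = ({x | A.G.Adj a x ∧ A.G.dist A.root x = l} : Set (Fin A.n)).ncard :=
    natCard_subtype _
  have hcover : A.G.neighborSet a =
      {x | A.G.Adj a x ∧ x ∈ VlS A l} ∪ {x | A.G.Adj a x ∧ A.G.dist A.root x = l} := by
    ext x
    simp only [SimpleGraph.mem_neighborSet, Set.mem_union, Set.mem_setOf_eq, VlS]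
    constructor
    · intro hx
      have halt := tree_adj_dist A.isTree (x := A.root) hx
      have hal : A.G.dist A.root a < l := ha
      rcases Nat.lt_or_ge (A.G.dist A.root x) l with h | h
      · exact Or.inl ⟨hx, h⟩
      · exact Or.inr ⟨hx, by omega⟩
    · tauto
  have hdisj : Disjoint {x | A.G.Adj a x ∧ x ∈ VlS A l}
      {x | A.G.Adj a x ∧ A.G.dist A.root x = l} := by
    rw [Set.disjoint_left]
    rintro x ⟨_, h1x⟩ ⟨_, h2x⟩
    have : A.G.dist A.root x < l := h1x
    omega
  rw [gdeg, hcover, Set.ncard_union_eq hdisj (Set.toFinite _) (Set.toFinite _), h1, h2]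

variable (hG : G.IsTree) (hl : 1 ≤ l)

include hG hl

/-- The key induction: an injective labeled homomorphism `φ` from `(T',r')` to `G`
preserves distances to the root, and is surjective onto each sphere of radius `< l`. -/
lemma keyC {φ : VlS A l → Fin n} (hinj : Function.Injective φ)
    (hhom : IsLabHom (TpG A l) (rS A l) G φ) :
    ∀ d, d < l →
      (∀ u : VlS A l, A.G.dist A.root u.1 = d →
        G.dist (φ ⟨A.root, root_mem_VlS hl⟩) (φ u) = d) ∧
      (∀ w : Fin n, G.dist (φ ⟨A.root, root_mem_VlS hl⟩) w = d →
        ∃ u : VlS A l, A.G.dist A.root u.1 = d ∧ φ u = w) := by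
  intro d
  induction d using Nat.strong_induction_on with
  | _ d ih =>
    intro hdl
    constructor
    · intro u hu
      cases d with
      | zero =>
        have : A.root = u.1 := (A.isTree.isConnected.dist_eq_zero_iff).1 hu
        have : (⟨A.root, root_mem_VlS hl⟩ : VlS A l) = u := Subtype.ext this
        rw [← this, SimpleGraph.dist_self]
      | succ e =>
        obtain ⟨p, hadj, hdp⟩ := exists_parent A.isTree (x := A.root) (w := u.1) (by omega)
        have hpe : A.G.dist A.root p = e := by omega
        have hpl : p ∈ VlS A l := by simp only [VlS, Set.mem_setOf_eq]; omega
        have hTadj : (TpG A l).Adj u ⟨p, hpl⟩ := hadj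
        have hGadj : G.Adj (φ u) (φ ⟨p, hpl⟩) := hhom.1 hTadj
        have hde := (ih e (by omega) (by omega)).1 ⟨p, hpl⟩ hpe
        rcases tree_adj_dist hG (x := φ ⟨A.root, root_mem_VlS hl⟩) hGadj.symm with h | h
        · omega
        · exfalso
          rw [hde] at h
          have he1 : 1 ≤ e := by omega
          have hgoal : G.dist (φ ⟨A.root, root_mem_VlS hl⟩) (φ u) = e - 1 := by omega
          obtain ⟨u', hu'd, hu'w⟩ := (ih (e-1) (by omega) (by omega)).2 (φ u) hgoal
          have heq : u' = u := hinj hu'w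
          rw [heq] at hu'd
          omega
    · intro w hw
      cases d with
      | zero =>
        refine ⟨⟨A.root, root_mem_VlS hl⟩, by simp [SimpleGraph.dist_self], ?_⟩
        have := (hG.isConnected.dist_eq_zero_iff).1 hw
        rw [← this]
      | succ e =>
        obtain ⟨w', hadjw, hdw⟩ := exists_parent hG
          (x := φ ⟨A.root, root_mem_VlS hl⟩) (w := w) (by omega)
        have hdw' : G.dist (φ ⟨A.root, root_mem_VlS hl⟩) w' = e := by omega
        obtain ⟨u', hu'd, hu'w⟩ := (ih e (by omega) (by omega)).2 w' hdw'
        have hr0 : rS A l u' = 0 := rS_eq_zero (by omega)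
        have hdeg : gdeg G (φ u') = gdeg (TpG A l) u' := by
          rw [hhom.2 u', hr0, add_zero]
        have himg := image_nbhd hinj hhom.1 u' hdeg
        have hwmem : w ∈ φ '' ((TpG A l).neighborSet u') := by
          rw [himg]
          show G.Adj (φ u') w
          rw [hu'w]
          exact hadjw.symm
        obtain ⟨x, hxnb, hxw⟩ := hwmem
        have hxadj : A.G.Adj u'.1 x.1 := hxnb
        rcases tree_adj_dist A.isTree (x := A.root) hxadj with h | h
        · exact ⟨x, by omega, hxw⟩
        · exfalso
          have he1 : 1 ≤ e := by omega
          have := (ih (e-1) (by omega) (by omega)).1 x (by omega)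
          rw [hxw] at this
          omega

/-- Adjacency reflection for injective labeled homomorphisms. -/
lemma homReflect {φ : VlS A l → Fin n} (hinj : Function.Injective φ)
    (hhom : IsLabHom (TpG A l) (rS A l) G φ) :
    ∀ u w : VlS A l, G.Adj (φ u) (φ w) → (TpG A l).Adj u w := by
  have helper : ∀ u w : VlS A l, G.Adj (φ u) (φ w) →
      A.G.dist A.root w.1 = A.G.dist A.root u.1 + 1 → (TpG A l).Adj u w := by
    intro u w hadj horder
    have hul : A.G.dist A.root u.1 + 1 < l := by
      have : A.G.dist A.root w.1 < l := w.2
      omega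
    have hr0 : rS A l u = 0 := rS_eq_zero hul
    have hdeg : gdeg G (φ u) = gdeg (TpG A l) u := by rw [hhom.2 u, hr0, add_zero]
    have himg := image_nbhd hinj hhom.1 u hdeg
    have : φ w ∈ φ '' ((TpG A l).neighborSet u) := by rw [himg]; exact hadj
    obtain ⟨z, hznb, hzw⟩ := this
    rwa [hinj hzw] at hznb
  intro u w hadj
  have hdu := (keyC hG hl hinj hhom _ u.2).1 u rfl
  have hdw := (keyC hG hl hinj hhom _ w.2).1 w rfl
  rcases tree_adj_dist hG (x := φ ⟨A.root, root_mem_VlS hl⟩) hadj with h | h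
  · exact helper u w hadj (by omega)
  · exact ((TpG A l).adj_symm (helper w u hadj.symm (by omega)))

/-- The number of extra neighbors equals the number of deleted children. -/
lemma extra_card {φ : VlS A l → Fin n} (hinj : Function.Injective φ)
    (hhom : IsLabHom (TpG A l) (rS A l) G φ) (i : Fin A.n) (hi : i ∈ VlS A l) :
    Nat.card (ExtraT G A l φ (φ ⟨i, hi⟩)) = Nat.card (ChildT A l i) := by
  classical
  have h1 : {w | G.Adj (φ ⟨i, hi⟩) w ∧ w ∉ Set.range φ} =
      G.neighborSet (φ ⟨i, hi⟩) \ (φ '' ((TpG A l).neighborSet ⟨i, hi⟩)) := by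
    ext w
    constructor
    · rintro ⟨hadj, hnr⟩
      exact ⟨hadj, fun hmem => hnr (Set.image_subset_range _ _ hmem)⟩
    · rintro ⟨hadj, hnot⟩
      refine ⟨hadj, ?_⟩
      rintro ⟨z, rfl⟩
      exact hnot ⟨z, homReflect hG hl hinj hhom _ _ hadj, rfl⟩
  have hsub : φ '' ((TpG A l).neighborSet ⟨i, hi⟩) ⊆ G.neighborSet (φ ⟨i, hi⟩) := by
    rintro w ⟨z, hz, rfl⟩
    exact hhom.1 hz
  have h2 : Nat.card (ExtraT G A l φ (φ ⟨i, hi⟩)) =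
      ({w | G.Adj (φ ⟨i, hi⟩) w ∧ w ∉ Set.range φ} : Set (Fin n)).ncard := natCard_subtype _
  rw [h2, h1, Set.ncard_diff hsub (Set.toFinite _)]
  have h3 : (φ '' ((TpG A l).neighborSet ⟨i, hi⟩)).ncard = gdeg (TpG A l) ⟨i, hi⟩ :=
    Set.ncard_image_of_injective _ hinj
  have h4 : (G.neighborSet (φ ⟨i, hi⟩)).ncard = gdeg (TpG A l) ⟨i, hi⟩ + rS A l ⟨i, hi⟩ :=
    hhom.2 ⟨i, hi⟩
  rw [h3, h4]
  simp [rS]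

end Main

section Main2

variable {n : ℕ} {G : SimpleGraph (Fin n)} {A : FRT} {l : ℕ}

/-- Rooted "full" embeddings of `A` into `G`. -/
def Mt (G : SimpleGraph (Fin n)) (A : FRT) (l : ℕ) : Type :=
  {ψ : Fin A.n → Fin n // Function.Injective ψ ∧ (∀ ⦃a b⦄, A.G.Adj a b → G.Adj (ψ a) (ψ b)) ∧
    ∀ a : Fin A.n, A.G.dist A.root a < l → gdeg G (ψ a) = gdeg A.G a}

instance : Finite (Mt G A l) := by unfold Mt; infer_instance

lemma restrict_spec {ψ : Fin A.n → Fin n} (hinj : Function.Injective ψ)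
    (hadj : ∀ ⦃a b⦄, A.G.Adj a b → G.Adj (ψ a) (ψ b))
    (hdeg : ∀ a : Fin A.n, A.G.dist A.root a < l → gdeg G (ψ a) = gdeg A.G a) :
    Function.Injective (fun u : VlS A l => ψ u.1) ∧
      IsLabHom (TpG A l) (rS A l) G (fun u : VlS A l => ψ u.1) := by
  refine ⟨fun u w h => Subtype.ext (hinj h), ⟨fun u w h => hadj h, fun u => ?_⟩⟩
  have h1 := hdeg u.1 u.2
  have h2 := gdeg_split (A := A) (l := l) u.2
  simp only at h1 ⊢
  rw [h1, h2]

variable (hG : G.IsTree) (hl : 1 ≤ l) (hdepth : A.depth = l)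

include hG hl hdepth

/-- Distance preservation and ball-surjectivity for elements of `Mt`. -/
lemma keyM {ψ : Fin A.n → Fin n} (hinj : Function.Injective ψ)
    (hadj : ∀ ⦃a b⦄, A.G.Adj a b → G.Adj (ψ a) (ψ b))
    (hdeg : ∀ a : Fin A.n, A.G.dist A.root a < l → gdeg G (ψ a) = gdeg A.G a) :
    (∀ a : Fin A.n, G.dist (ψ A.root) (ψ a) = A.G.dist A.root a) ∧
      (∀ w : Fin n, G.dist (ψ A.root) w ≤ l → w ∈ Set.range ψ) := by
  obtain ⟨hinj', hhom'⟩ := restrict_spec hinj hadj hdeg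
  have hroot : (fun u : VlS A l => ψ u.1) ⟨A.root, root_mem_VlS hl⟩ = ψ A.root := rfl
  have hC := keyC hG hl hinj' hhom'
  have hCa : ∀ d, d < l → ∀ u : VlS A l, A.G.dist A.root u.1 = d →
      G.dist (ψ A.root) (ψ u.1) = d := fun d hd u hu => (hC d hd).1 u hu
  have hCb : ∀ d, d < l → ∀ w : Fin n, G.dist (ψ A.root) w = d →
      ∃ u : VlS A l, A.G.dist A.root u.1 = d ∧ ψ u.1 = w := fun d hd w hw => (hC d hd).2 w hw
  clear hC
  constructor
  · intro a
    by_cases ha : A.G.dist A.root a < l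
    · exact hCa _ ha ⟨a, ha⟩ rfl
    · have hda : A.G.dist A.root a = l := le_antisymm (depth_le hdepth a) (not_lt.1 ha)
      obtain ⟨p, hpadj, hpd⟩ := exists_parent A.isTree (x := A.root) (w := a) (by omega)
      have hpl : p ∈ VlS A l := by simp only [VlS, Set.mem_setOf_eq]; omega
      have hdp : G.dist (ψ A.root) (ψ p) = l - 1 := hCa (l-1) (by omega) ⟨p, hpl⟩ (show A.G.dist A.root p = l - 1 by omega)
      have hGadj : G.Adj (ψ p) (ψ a) := hadj hpadj.symm
      rcases tree_adj_dist hG (x := ψ A.root) hGadj with h | h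
      · omega
      · exfalso
        have hlt : G.dist (ψ A.root) (ψ a) < l := by omega
        obtain ⟨u, hud, huw⟩ := hCb _ hlt (ψ a) rfl
        have heqa : u.1 = a := hinj huw
        have hul : A.G.dist A.root u.1 < l := u.2
        rw [heqa] at hud hul
        omega
  · intro w hw
    by_cases hwl : G.dist (ψ A.root) w < l
    · obtain ⟨u, _, huw⟩ := hCb _ hwl w rfl
      exact ⟨u.1, huw⟩
    · have hwd : G.dist (ψ A.root) w = l := by omega
      obtain ⟨w', hadjw, hdw⟩ := exists_parent hG (x := ψ A.root) (w := w) (by omega)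
      obtain ⟨u', hu'd, hu'w⟩ := hCb (l-1) (by omega) w' (by omega)
      have hfull : gdeg G (ψ u'.1) = gdeg A.G u'.1 := hdeg u'.1 u'.2
      have himg := image_nbhd hinj hadj u'.1 hfull
      have hwmem : w ∈ ψ '' (A.G.neighborSet u'.1) := by
        rw [himg]
        show G.Adj (ψ u'.1) w
        rw [hu'w]
        exact hadjw.symm
      obtain ⟨x, _, hxw⟩ := hwmem
      exact ⟨x, hxw⟩

/-- Adjacency reflection for elements of `Mt`. -/
lemma reflectM {ψ : Fin A.n → Fin n} (hinj : Function.Injective ψ)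
    (hadj : ∀ ⦃a b⦄, A.G.Adj a b → G.Adj (ψ a) (ψ b))
    (hdeg : ∀ a : Fin A.n, A.G.dist A.root a < l → gdeg G (ψ a) = gdeg A.G a) :
    ∀ a b : Fin A.n, G.Adj (ψ a) (ψ b) → A.G.Adj a b := by
  have hK := keyM hG hl hdepth hinj hadj hdeg
  have helper : ∀ a b : Fin A.n, G.Adj (ψ a) (ψ b) →
      A.G.dist A.root b = A.G.dist A.root a + 1 → A.G.Adj a b := by
    intro a b hab horder
    have hbl : A.G.dist A.root b ≤ l := depth_le hdepth b
    have hfull : gdeg G (ψ a) = gdeg A.G a := hdeg a (by omega)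
    have himg := image_nbhd hinj hadj a hfull
    have : ψ b ∈ ψ '' (A.G.neighborSet a) := by rw [himg]; exact hab
    obtain ⟨z, hz, hzw⟩ := this
    rwa [hinj hzw] at hz
  intro a b hab
  have hda := (hK.1) a
  have hdb := (hK.1) b
  rcases tree_adj_dist hG (x := ψ A.root) hab with h | h
  · exact helper a b hab (by omega)
  · exact (helper b a hab.symm (by omega)).symm

lemma ball_eq {ψ : Fin A.n → Fin n} (hinj : Function.Injective ψ)
    (hadj : ∀ ⦃a b⦄, A.G.Adj a b → G.Adj (ψ a) (ψ b))
    (hdeg : ∀ a : Fin A.n, A.G.dist A.root a < l → gdeg G (ψ a) = gdeg A.G a) :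
    ballSet G (ψ A.root) l = Set.range ψ := by
  have hK := keyM hG hl hdepth hinj hadj hdeg
  ext w
  constructor
  · rintro ⟨_, hd⟩
    exact hK.2 w hd
  · rintro ⟨a, rfl⟩
    exact ⟨hG.isConnected _ _, by rw [hK.1 a]; exact depth_le hdepth a⟩

end Main2

section Main3

variable {n : ℕ} {G : SimpleGraph (Fin n)} {A : FRT} {l : ℕ}

lemma isoFinite {β γ : Type*} [Finite β] [Finite γ] (K : SimpleGraph β) (K' : SimpleGraph γ) :
    Finite (K ≃g K') := by
  apply Finite.of_injective (fun e : K ≃g K' => e.toEquiv)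
  intro e e' h
  exact RelIso.ext (fun x => congrArg (fun q : β ≃ γ => q x) h)

/-- The rooted-isomorphism counting type. -/
def S1T (G : SimpleGraph (Fin n)) (A : FRT) (l : ℕ) : Type :=
  (v : Fin n) × {e : (G.induce (ballSet G v l)) ≃g A.G // e ⟨v, self_mem_ballSet G v l⟩ = A.root}

instance : Finite (S1T G A l) := by
  unfold S1T
  have h : ∀ v : Fin n, Finite ((G.induce (ballSet G v l)) ≃g A.G) :=
    fun v => isoFinite _ _
  infer_instance

variable (hG : G.IsTree) (hl : 1 ≤ l) (hdepth : A.depth = l)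

/-- The forward map from rooted ball isomorphisms to full embeddings. -/
noncomputable def Phi1 (p : S1T G A l) : Fin A.n → Fin n := fun a => (p.2.1.symm a).1

include hG in
lemma Phi1_mem (p : S1T G A l) :
    Function.Injective (Phi1 p) ∧ (∀ ⦃a b⦄, A.G.Adj a b → G.Adj (Phi1 p a) (Phi1 p b)) ∧
    ∀ a : Fin A.n, A.G.dist A.root a < l → gdeg G (Phi1 p a) = gdeg A.G a := by
  obtain ⟨v, e, he⟩ := p
  have hsymm_root : e.symm A.root = ⟨v, self_mem_ballSet G v l⟩ := by
    rw [← he]; exact e.symm_apply_apply _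
  refine ⟨?_, ?_, ?_⟩
  · intro a b h
    exact e.symm.toEquiv.injective (Subtype.ext h)
  · intro a b h
    exact e.symm.map_rel_iff.mpr h
  · intro a ha
    have step1 : gdeg (G.induce (ballSet G v l)) (e.symm a) = gdeg A.G a := iso_gdeg e.symm a
    have step2 : (G.induce (ballSet G v l)).dist ⟨v, self_mem_ballSet G v l⟩ (e.symm a)
        = A.G.dist A.root a := by
      rw [← hsymm_root]; exact iso_dist e.symm A.root a
    have step3 : (G.induce (ballSet G v l)).Reachable ⟨v, self_mem_ballSet G v l⟩ (e.symm a) := by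
      have hr : A.G.Reachable A.root a := A.isTree.isConnected A.root a
      have h2 := hr.map e.symm.toHom
      have h3 : (G.induce (ballSet G v l)).Reachable (e.symm A.root) (e.symm a) := h2
      rwa [hsymm_root] at h3
    have step4 : G.dist v (e.symm a).1 < l := by
      have hle := hom_dist_le (SimpleGraph.Embedding.induce (ballSet G v l)).toHom step3
      have : G.dist v (e.symm a).1 ≤ (G.induce (ballSet G v l)).dist
          ⟨v, self_mem_ballSet G v l⟩ (e.symm a) := hle
      omega
    have step5 : ∀ x : Fin n, G.Adj (e.symm a).1 x → x ∈ ballSet G v l := by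
      intro x hx
      refine ⟨hG.isConnected v x, ?_⟩
      have h1 := hG.isConnected.dist_triangle (u := v) (v := (e.symm a).1) (w := x)
      have h2 : G.dist (e.symm a).1 x = 1 := (SimpleGraph.dist_eq_one_iff_adj).2 hx
      omega
    have step6 : gdeg G (e.symm a).1 = gdeg (G.induce (ballSet G v l)) (e.symm a) := by
      rw [gdeg_eq_natCard, gdeg_eq_natCard]
      refine (Nat.card_congr (Equiv.symm ?_))
      exact {
        toFun := fun x => ⟨x.1.1, x.2⟩
        invFun := fun y => ⟨⟨y.1, step5 y.1 y.2⟩, y.2⟩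
        left_inv := fun x => Subtype.ext (Subtype.ext rfl)
        right_inv := fun y => Subtype.ext rfl }
    unfold Phi1
    simp only
    rw [step6, step1]

include hG hl hdepth in
lemma Phi1_bij : Function.Bijective (fun p : S1T G A l =>
    (⟨Phi1 p, (Phi1_mem hG p).1, (Phi1_mem hG p).2.1, (Phi1_mem hG p).2.2⟩ : Mt G A l)) := by
  constructor
  · rintro ⟨v, e, he⟩ ⟨v', e', he'⟩ hpq
    have hfun : Phi1 ⟨v, e, he⟩ = Phi1 ⟨v', e', he'⟩ := congrArg Subtype.val hpq
    have hsymm_root : e.symm A.root = ⟨v, self_mem_ballSet G v l⟩ := by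
      rw [← he]; exact e.symm_apply_apply _
    have hsymm_root' : e'.symm A.root = ⟨v', self_mem_ballSet G v' l⟩ := by
      rw [← he']; exact e'.symm_apply_apply _
    have hv : v = v' := by
      have h1 : (e.symm A.root).1 = (e'.symm A.root).1 := congrFun hfun A.root
      rw [hsymm_root, hsymm_root'] at h1
      exact h1
    subst hv
    have hsym : ∀ a, e.symm a = e'.symm a :=
      fun a => Subtype.ext (congrFun hfun a)
    have hee : ∀ x, e x = e' x := by
      intro x
      apply e'.toEquiv.symm.injective
      show e'.symm (e x) = e'.symm (e' x)
      rw [← hsym (e x), e.symm_apply_apply, e'.symm_apply_apply]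
    have : e = e' := RelIso.ext hee
    subst this
    rfl
  · rintro ⟨ψ, hinj, hadj, hdeg⟩
    set v := ψ A.root with hv
    have hball : ballSet G v l = Set.range ψ := ball_eq hG hl hdepth hinj hadj hdeg
    have hmem : ∀ a : Fin A.n, ψ a ∈ ballSet G v l := by
      intro a; rw [hball]; exact ⟨a, rfl⟩
    set f0 : Fin A.n → ↥(ballSet G v l) := fun a => ⟨ψ a, hmem a⟩ with hf0
    have hbij : Function.Bijective f0 := by
      constructor
      · intro a b h
        exact hinj (congrArg Subtype.val h)
      · rintro ⟨x, hx⟩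
        rw [hball] at hx
        obtain ⟨a, rfl⟩ := hx
        exact ⟨a, rfl⟩
    have hrefl := reflectM hG hl hdepth hinj hadj hdeg
    set iso0 : A.G ≃g (G.induce (ballSet G v l)) :=
      { toEquiv := Equiv.ofBijective f0 hbij
        map_rel_iff' := by
          intro a b
          show (G.induce (ballSet G v l)).Adj (f0 a) (f0 b) ↔ A.G.Adj a b
          constructor
          · intro h; exact hrefl a b h
          · intro h; exact hadj h } with hiso0
    have hroot0 : iso0 A.root = ⟨v, self_mem_ballSet G v l⟩ := Subtype.ext rfl
    refine ⟨⟨v, iso0.symm, ?_⟩, ?_⟩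
    · rw [← hroot0]; exact iso0.symm_apply_apply _
    · apply Subtype.ext
      funext a
      show (iso0.symm.symm a).1 = ψ a
      rfl

include hG hl hdepth in
lemma card_S1_eq_Mt : Nat.card (S1T G A l) = Nat.card (Mt G A l) :=
  Nat.card_congr (Equiv.ofBijective _ (Phi1_bij hG hl hdepth))

end Main3

section Main4

variable {n : ℕ} {G : SimpleGraph (Fin n)} {A : FRT} {l : ℕ}

/-- The unique neighbor of `a` closer to the root. -/
noncomputable def parentOf (A : FRT) {a : Fin A.n} (h : 0 < A.G.dist A.root a) : Fin A.n :=
  (exists_parent A.isTree h).choose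

lemma parentOf_spec (A : FRT) {a : Fin A.n} (h : 0 < A.G.dist A.root a) :
    A.G.Adj a (parentOf A h) ∧ A.G.dist A.root (parentOf A h) + 1 = A.G.dist A.root a :=
  (exists_parent A.isTree h).choose_spec

/-- Homomorphism data. -/
def HomT (G : SimpleGraph (Fin n)) (A : FRT) (l : ℕ) : Type :=
  {φ : VlS A l → Fin n // Function.Injective φ ∧ IsLabHom (TpG A l) (rS A l) G φ}

instance : Finite (HomT G A l) := by unfold HomT; infer_instance

/-- The sigma type counting homomorphisms together with child-matchings. -/
def S2T (G : SimpleGraph (Fin n)) (A : FRT) (l : ℕ) (hl : 1 ≤ l) : Type :=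
  (φ : HomT G A l) ×
    (∀ i : SphT A l, ChildT A l i.1 ≃ ExtraT G A l φ.1 (φ.1 ⟨i.1, sph_mem_VlS hl i.2⟩))

instance (hl : 1 ≤ l) : Finite (S2T G A l hl) := by unfold S2T; infer_instance

/-- The extension of `φ` by the child-matchings. -/
noncomputable def psiOf (hl : 1 ≤ l) (hdepth : A.depth = l) (φ : VlS A l → Fin n)
    (b : ∀ i : SphT A l, ChildT A l i.1 → Fin n) : Fin A.n → Fin n := fun a =>
  if h : A.G.dist A.root a < l then φ ⟨a, h⟩
  else
    have hda : A.G.dist A.root a = l := le_antisymm (depth_le hdepth a) (not_lt.1 h)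
    have hpos : 0 < A.G.dist A.root a := by omega
    b ⟨parentOf A hpos, by have := (parentOf_spec A hpos).2; omega⟩
      ⟨a, ((parentOf_spec A hpos).1).symm, hda⟩

variable {hl : 1 ≤ l} {hdepth : A.depth = l} in
lemma psiOf_pos (φ : VlS A l → Fin n) (b : ∀ i : SphT A l, ChildT A l i.1 → Fin n)
    {a : Fin A.n} (h : A.G.dist A.root a < l) :
    psiOf hl hdepth φ b a = φ ⟨a, h⟩ := dif_pos h

variable {hl : 1 ≤ l} {hdepth : A.depth = l} in
lemma psiOf_child (φ : VlS A l → Fin n) (b : ∀ i : SphT A l, ChildT A l i.1 → Fin n)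
    {a : Fin A.n} (hda : A.G.dist A.root a = l) {i : SphT A l} (hia : A.G.Adj i.1 a) :
    psiOf hl hdepth φ b a = b i ⟨a, hia, hda⟩ := by
  have hnl : ¬ A.G.dist A.root a < l := by omega
  rw [psiOf, dif_neg hnl]
  have hpos : 0 < A.G.dist A.root a := by omega
  have hpar : parentOf A hpos = i.1 := by
    apply unique_parent A.isTree (x := A.root) (w := a) (parentOf_spec A hpos).1 hia.symm
    · exact (parentOf_spec A hpos).2
    · have := i.2; omega
  have hmk : (⟨parentOf A hpos, by have := (parentOf_spec A hpos).2; omega⟩ : SphT A l) = i :=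
    Subtype.ext hpar
  have key : ∀ (j j' : SphT A l) (hjj : j = j') (c : ChildT A l j.1) (c' : ChildT A l j'.1),
      c.1 = c'.1 → b j c = b j' c' := by
    rintro j _ rfl c c' hcc
    exact congrArg (b j) (Subtype.ext hcc)
  exact key _ i hmk _ _ rfl

variable (hG : G.IsTree) (hl : 1 ≤ l) (hdepth : A.depth = l)

include hG hl hdepth

/-- The extension `psiOf` belongs to `Mt`. -/
lemma psiOf_mem {φ : VlS A l → Fin n} (hinj : Function.Injective φ)
    (hhom : IsLabHom (TpG A l) (rS A l) G φ)
    (b : ∀ i : SphT A l, ChildT A l i.1 → Fin n)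
    (hbadj : ∀ (i : SphT A l) (c : ChildT A l i.1),
      G.Adj (φ ⟨i.1, sph_mem_VlS hl i.2⟩) (b i c))
    (hbr : ∀ (i : SphT A l) (c : ChildT A l i.1), b i c ∉ Set.range φ)
    (hbinj : ∀ i : SphT A l, Function.Injective (b i)) :
    Function.Injective (psiOf hl hdepth φ b) ∧
    (∀ ⦃a a' : Fin A.n⦄, A.G.Adj a a' →
      G.Adj (psiOf hl hdepth φ b a) (psiOf hl hdepth φ b a')) ∧
    ∀ a : Fin A.n, A.G.dist A.root a < l →
      gdeg G (psiOf hl hdepth φ b a) = gdeg A.G a := by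
  have hC := keyC hG hl hinj hhom
  have hCa : ∀ d, d < l → ∀ u : VlS A l, A.G.dist A.root u.1 = d →
      G.dist (φ ⟨A.root, root_mem_VlS hl⟩) (φ u) = d := fun d hd u hu => (hC d hd).1 u hu
  have hCb : ∀ d, d < l → ∀ w : Fin n, G.dist (φ ⟨A.root, root_mem_VlS hl⟩) w = d →
      ∃ u : VlS A l, A.G.dist A.root u.1 = d ∧ φ u = w := fun d hd w hw => (hC d hd).2 w hw
  clear hC
  -- distance of extra vertices
  have fact1 : ∀ (i : SphT A l) (c : ChildT A l i.1),
      G.dist (φ ⟨A.root, root_mem_VlS hl⟩) (b i c) = l := by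
    intro i c
    have hdi : G.dist (φ ⟨A.root, root_mem_VlS hl⟩) (φ ⟨i.1, sph_mem_VlS hl i.2⟩) = l - 1 :=
      hCa (l-1) (by omega) ⟨i.1, sph_mem_VlS hl i.2⟩ i.2
    rcases tree_adj_dist hG (x := φ ⟨A.root, root_mem_VlS hl⟩) (hbadj i c) with h | h
    · omega
    · exfalso
      have hlt : G.dist (φ ⟨A.root, root_mem_VlS hl⟩) (b i c) < l := by omega
      obtain ⟨u, _, huw⟩ := hCb _ hlt (b i c) rfl
      exact hbr i c ⟨u, huw⟩
  refine ⟨?_, ?_, ?_⟩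
  · -- injectivity
    intro a a' h
    by_cases ha : A.G.dist A.root a < l <;> by_cases ha' : A.G.dist A.root a' < l
    · rw [psiOf_pos φ b ha, psiOf_pos φ b ha'] at h
      exact congrArg Subtype.val (hinj h)
    · exfalso
      have hda' : A.G.dist A.root a' = l := le_antisymm (depth_le hdepth a') (not_lt.1 ha')
      obtain ⟨p, hpadj, hpd⟩ := exists_parent A.isTree (x := A.root) (w := a') (by omega)
      have hip : (⟨p, by omega⟩ : SphT A l).1 = p := rfl
      rw [psiOf_pos φ b ha,
        psiOf_child φ b hda' (i := ⟨p, by omega⟩) hpadj.symm] at h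
      exact hbr _ _ ⟨⟨a, ha⟩, h⟩
    · exfalso
      have hda : A.G.dist A.root a = l := le_antisymm (depth_le hdepth a) (not_lt.1 ha)
      obtain ⟨p, hpadj, hpd⟩ := exists_parent A.isTree (x := A.root) (w := a) (by omega)
      rw [psiOf_pos φ b ha',
        psiOf_child φ b hda (i := ⟨p, by omega⟩) hpadj.symm] at h
      exact hbr _ _ ⟨⟨a', ha'⟩, h.symm⟩
    · have hda : A.G.dist A.root a = l := le_antisymm (depth_le hdepth a) (not_lt.1 ha)
      have hda' : A.G.dist A.root a' = l := le_antisymm (depth_le hdepth a') (not_lt.1 ha')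
      obtain ⟨p, hpadj, hpd⟩ := exists_parent A.isTree (x := A.root) (w := a) (by omega)
      obtain ⟨p', hpadj', hpd'⟩ := exists_parent A.isTree (x := A.root) (w := a') (by omega)
      set i : SphT A l := ⟨p, by omega⟩ with hi
      set i' : SphT A l := ⟨p', by omega⟩ with hi'
      rw [psiOf_child φ b hda (i := i) hpadj.symm,
        psiOf_child φ b hda' (i := i') hpadj'.symm] at h
      have hii : i = i' := by
        have h1 : G.Adj (φ ⟨i.1, sph_mem_VlS hl i.2⟩) (b i ⟨a, hpadj.symm, hda⟩) := hbadj i _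
        have h2 : G.Adj (φ ⟨i'.1, sph_mem_VlS hl i'.2⟩) (b i' ⟨a', hpadj'.symm, hda'⟩) :=
          hbadj i' _
        rw [h] at h1
        have hd1 : G.dist (φ ⟨A.root, root_mem_VlS hl⟩) (φ ⟨i.1, sph_mem_VlS hl i.2⟩) = l - 1 :=
          hCa (l-1) (by omega) _ i.2
        have hd2 : G.dist (φ ⟨A.root, root_mem_VlS hl⟩) (φ ⟨i'.1, sph_mem_VlS hl i'.2⟩) = l - 1 :=
          hCa (l-1) (by omega) _ i'.2
        have hdw : G.dist (φ ⟨A.root, root_mem_VlS hl⟩) (b i' ⟨a', hpadj'.symm, hda'⟩) = l :=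
          fact1 i' _
        have := unique_parent hG (x := φ ⟨A.root, root_mem_VlS hl⟩)
          h1.symm h2.symm (by omega) (by omega)
        have h12 := hinj this
        rw [Subtype.mk.injEq] at h12
        exact Subtype.ext h12
      have key2 : ∀ (j j' : SphT A l) (hjj : j = j') (c : ChildT A l j.1)
          (c' : ChildT A l j'.1), b j c = b j' c' → c.1 = c'.1 := by
        rintro j _ rfl c c' hcc
        exact congrArg Subtype.val (hbinj j hcc)
      exact key2 i i' hii _ _ h
  · -- adjacency
    intro a a' hadj
    by_cases ha : A.G.dist A.root a < l <;> by_cases ha' : A.G.dist A.root a' < l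
    · rw [psiOf_pos φ b ha, psiOf_pos φ b ha']
      exact hhom.1 (show (TpG A l).Adj ⟨a, ha⟩ ⟨a', ha'⟩ from hadj)
    · have hda' : A.G.dist A.root a' = l := le_antisymm (depth_le hdepth a') (not_lt.1 ha')
      have hsph : A.G.dist A.root a = l - 1 := by
        rcases tree_adj_dist A.isTree (x := A.root) hadj with h | h <;> omega
      set i : SphT A l := ⟨a, hsph⟩ with hi
      rw [psiOf_pos φ b ha, psiOf_child φ b hda' (i := i) hadj]
      exact hbadj i _
    · have hda : A.G.dist A.root a = l := le_antisymm (depth_le hdepth a) (not_lt.1 ha)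
      have hsph : A.G.dist A.root a' = l - 1 := by
        rcases tree_adj_dist A.isTree (x := A.root) hadj with h | h <;> omega
      set i : SphT A l := ⟨a', hsph⟩ with hi
      rw [psiOf_pos φ b ha', psiOf_child φ b hda (i := i) hadj.symm]
      exact (hbadj i _).symm
    · exfalso
      have hda : A.G.dist A.root a = l := le_antisymm (depth_le hdepth a) (not_lt.1 ha)
      have hda' : A.G.dist A.root a' = l := le_antisymm (depth_le hdepth a') (not_lt.1 ha')
      rcases tree_adj_dist A.isTree (x := A.root) hadj with h | h <;> omega
  · -- degrees
    intro a ha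
    rw [psiOf_pos φ b ha, hhom.2 ⟨a, ha⟩, ← gdeg_split (A := A) (l := l) ha]

end Main4

section Main5

variable {n : ℕ} {G : SimpleGraph (Fin n)} {A : FRT} {l : ℕ}
variable (hG : G.IsTree) (hl : 1 ≤ l) (hdepth : A.depth = l)

/-- The map from homomorphism-with-matching data to full embeddings. -/
noncomputable def Bmap (p : S2T G A l hl) : Fin A.n → Fin n :=
  psiOf hl hdepth p.1.1 (fun i c => (p.2 i c).1)

include hG in
lemma Bmap_mem (p : S2T G A l hl) :
    Function.Injective (Bmap hl hdepth p) ∧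
    (∀ ⦃a a' : Fin A.n⦄, A.G.Adj a a' → G.Adj (Bmap hl hdepth p a) (Bmap hl hdepth p a')) ∧
    ∀ a : Fin A.n, A.G.dist A.root a < l →
      gdeg G (Bmap hl hdepth p a) = gdeg A.G a := by
  apply psiOf_mem hG hl hdepth p.1.2.1 p.1.2.2
  · exact fun i c => (p.2 i c).2.1
  · exact fun i c => (p.2 i c).2.2
  · exact fun i c c' h => (p.2 i).injective (Subtype.ext h)

include hG hl hdepth in
lemma Bmap_bij : Function.Bijective (fun p : S2T G A l hl =>
    (⟨Bmap hl hdepth p, (Bmap_mem hG hl hdepth p).1, (Bmap_mem hG hl hdepth p).2.1,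
      (Bmap_mem hG hl hdepth p).2.2⟩ : Mt G A l)) := by
  constructor
  · rintro ⟨⟨φ, hφ⟩, bp⟩ ⟨⟨φ', hφ'⟩, bq⟩ hpq
    have hfun : Bmap hl hdepth ⟨⟨φ, hφ⟩, bp⟩ = Bmap hl hdepth ⟨⟨φ', hφ'⟩, bq⟩ :=
      congrArg Subtype.val hpq
    have hφeq : φ = φ' := by
      funext u
      have h1 := congrFun hfun u.1
      unfold Bmap at h1
      simp only at h1
      rw [psiOf_pos φ _ u.2, psiOf_pos φ' _ u.2] at h1
      exact h1
    subst hφeq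
    have hbeq : bp = bq := by
      funext i
      apply Equiv.ext
      intro c
      apply Subtype.ext
      have h1 := congrFun hfun c.1
      unfold Bmap at h1
      simp only at h1
      rw [psiOf_child φ _ c.2.2 (i := i) c.2.1, psiOf_child φ _ c.2.2 (i := i) c.2.1] at h1
      exact h1
    cases hbeq
    rfl
  · rintro ⟨ψ, hinj, hadj, hdeg⟩
    obtain ⟨hinj0, hhom0⟩ := restrict_spec (G := G) (A := A) (l := l) hinj hadj hdeg
    set φ0 : VlS A l → Fin n := fun u => ψ u.1 with hφ0
    have hbmem : ∀ (i : SphT A l) (c : ChildT A l i.1),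
        G.Adj (φ0 ⟨i.1, sph_mem_VlS hl i.2⟩) (ψ c.1) ∧ ψ c.1 ∉ Set.range φ0 := by
      intro i c
      constructor
      · exact hadj c.2.1
      · rintro ⟨u, hu⟩
        have : u.1 = c.1 := hinj hu
        have h1 : A.G.dist A.root u.1 < l := u.2
        have h2 := c.2.2
        rw [this] at h1
        omega
    have hbij : ∀ i : SphT A l, Function.Bijective
        (fun c : ChildT A l i.1 =>
          (⟨ψ c.1, (hbmem i c).1, (hbmem i c).2⟩ :
            ExtraT G A l φ0 (φ0 ⟨i.1, sph_mem_VlS hl i.2⟩))) := by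
      intro i
      constructor
      · intro c c' h
        exact Subtype.ext (hinj (congrArg Subtype.val h))
      · rintro ⟨w, hwadj, hwr⟩
        have hfull : gdeg G (ψ i.1) = gdeg A.G i.1 := hdeg i.1 (by have := i.2; omega)
        have himg := image_nbhd hinj hadj i.1 hfull
        have hwmem : w ∈ ψ '' (A.G.neighborSet i.1) := by
          rw [himg]; exact hwadj
        obtain ⟨x, hxnb, hxw⟩ := hwmem
        have hxd : A.G.dist A.root x = l := by
          by_contra hxl
          have hxlt : A.G.dist A.root x < l :=
            lt_of_le_of_ne (depth_le hdepth x) hxl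
          exact hwr ⟨⟨x, hxlt⟩, hxw⟩
        refine ⟨⟨x, hxnb, hxd⟩, Subtype.ext hxw⟩
    refine ⟨⟨⟨φ0, hinj0, hhom0⟩, fun i => Equiv.ofBijective _ (hbij i)⟩, ?_⟩
    apply Subtype.ext
    funext a
    show Bmap hl hdepth _ a = ψ a
    unfold Bmap
    simp only
    by_cases ha : A.G.dist A.root a < l
    · rw [psiOf_pos φ0 _ ha]
    · have hda : A.G.dist A.root a = l := le_antisymm (depth_le hdepth a) (not_lt.1 ha)
      obtain ⟨p, hpadj, hpd⟩ := exists_parent A.isTree (x := A.root) (w := a) (by omega)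
      rw [psiOf_child φ0 _ hda (i := ⟨p, by omega⟩) hpadj.symm]
      rfl

include hG hl hdepth in
lemma card_S2_eq_Mt : Nat.card (S2T G A l hl) = Nat.card (Mt G A l) :=
  Nat.card_congr (Equiv.ofBijective _ (Bmap_bij hG hl hdepth))

end Main5

section Main6

variable {n : ℕ} {G : SimpleGraph (Fin n)} {A : FRT} {l : ℕ}
variable (hG : G.IsTree) (hl : 1 ≤ l) (hdepth : A.depth = l)

include hG hl in
lemma card_S2_count :
    Nat.card (S2T G A l hl) =
      injLabCount (TpG A l) (rS A l) G * ∏ᶠ i : SphT A l, Nat.factorial (Nat.card (ChildT A l i.1)) := by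
  classical
  letI : Fintype (HomT G A l) := Fintype.ofFinite _
  letI : Fintype (SphT A l) := Fintype.ofFinite _
  have hfiber : ∀ φ : HomT G A l,
      Nat.card (∀ i : SphT A l,
        ChildT A l i.1 ≃ ExtraT G A l φ.1 (φ.1 ⟨i.1, sph_mem_VlS hl i.2⟩)) =
      ∏ i : SphT A l, Nat.factorial (Nat.card (ChildT A l i.1)) := by
    intro φ
    rw [Nat.card_pi]
    apply Finset.prod_congr rfl
    intro i _
    have hcard : Nat.card (ExtraT G A l φ.1 (φ.1 ⟨i.1, sph_mem_VlS hl i.2⟩)) =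
        Nat.card (ChildT A l i.1) := extra_card hG hl φ.2.1 φ.2.2 i.1 (sph_mem_VlS hl i.2)
    letI : Fintype (ChildT A l i.1) := Fintype.ofFinite _
    letI : Fintype (ExtraT G A l φ.1 (φ.1 ⟨i.1, sph_mem_VlS hl i.2⟩)) := Fintype.ofFinite _
    have hceq : Fintype.card (ChildT A l i.1) =
        Fintype.card (ExtraT G A l φ.1 (φ.1 ⟨i.1, sph_mem_VlS hl i.2⟩)) := by
      rw [← Nat.card_eq_fintype_card, ← Nat.card_eq_fintype_card, hcard]
    have e := Fintype.equivOfCardEq hceq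
    rw [Nat.card_eq_fintype_card, Fintype.card_equiv e, ← Nat.card_eq_fintype_card]
  have h1 : Nat.card (S2T G A l hl) =
      ∑ φ : HomT G A l, ∏ i : SphT A l, Nat.factorial (Nat.card (ChildT A l i.1)) := by
    rw [S2T, my_card_sigma]
    exact Finset.sum_congr rfl (fun φ _ => hfiber φ)
  rw [h1, Finset.sum_const, Finset.card_univ, smul_eq_mul]
  congr 1
  · rw [← Nat.card_eq_fintype_card]; rfl
  · rw [finprod_eq_prod_of_fintype]

include hG in
lemma card_S1_count :
    Nat.card (S1T G A l) = nbhdCount G l A.G A.root * A.autCard := by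
  classical
  haveI : ∀ v : Fin n, Finite ((G.induce (ballSet G v l)) ≃g A.G) := fun v => isoFinite _ _
  haveI : Finite (A.G ≃g A.G) := isoFinite _ _
  have hv : ∀ v : Fin n,
      Nat.card {e : (G.induce (ballSet G v l)) ≃g A.G // e ⟨v, self_mem_ballSet G v l⟩ = A.root}
        = if RootedBallIso G v l A.G A.root then A.autCard else 0 := by
    intro v
    by_cases h : RootedBallIso G v l A.G A.root
    · rw [if_pos h]
      obtain ⟨e₀, he₀⟩ := h
      have hs₀ : e₀.symm A.root = ⟨v, self_mem_ballSet G v l⟩ := by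
        rw [← he₀]; exact e₀.symm_apply_apply _
      have : {e : (G.induce (ballSet G v l)) ≃g A.G // e ⟨v, self_mem_ballSet G v l⟩ = A.root}
          ≃ {f : A.G ≃g A.G // f A.root = A.root} :=
        { toFun := fun e => ⟨(e₀.symm).trans e.1, by
            rw [RelIso.trans_apply, hs₀]; exact e.2⟩
          invFun := fun f => ⟨e₀.trans f.1, by
            rw [RelIso.trans_apply, he₀]; exact f.2⟩
          left_inv := fun e => Subtype.ext (RelIso.ext fun x => by
            rw [RelIso.trans_apply, RelIso.trans_apply, RelIso.symm_apply_apply])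
          right_inv := fun f => Subtype.ext (RelIso.ext fun x => by
            rw [RelIso.trans_apply, RelIso.trans_apply, RelIso.apply_symm_apply]) }
      rw [Nat.card_congr this]
      rfl
    · rw [if_neg h]
      haveI : IsEmpty
          {e : (G.induce (ballSet G v l)) ≃g A.G // e ⟨v, self_mem_ballSet G v l⟩ = A.root} :=
        ⟨fun e => h ⟨e.1, e.2⟩⟩
      exact Nat.card_of_isEmpty
  have h1 : Nat.card (S1T G A l) =
      ∑ v : Fin n, if RootedBallIso G v l A.G A.root then A.autCard else 0 := by
    rw [S1T, my_card_sigma]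
    exact Finset.sum_congr rfl (fun v _ => hv v)
  rw [h1, ← Finset.sum_filter]
  rw [Finset.sum_const, smul_eq_mul]
  congr 1
  rw [nbhdCount, Nat.card_eq_fintype_card, Fintype.card_subtype]

end Main6

/-- For a labeled tree `G` on `n` vertices and an `l`-deep rooted tree
`T_x^l`: `n · p(l, T_x^l, U(G)) · |Aut(T_x^l)|` equals the number of injective labeled
homomorphisms from the numbered tree `(T', r')` (obtained by deleting the depth-`l`
vertices, with remainder degrees counting the deleted neighbors) to `G`, times
`∏_{i ∈ T_{l−1}} c_i!`. -/
theorem nbhd_count_eq_injLab (n : ℕ) (G : SimpleGraph (Fin n)) (hG : G.IsTree)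
    (A : FRT) (l : ℕ) (hl : 1 ≤ l) (hdepth : A.depth = l) :
    (n : ℚ) * ((nbhdCount G l A.G A.root : ℚ) / (n : ℚ)) * (A.autCard : ℚ) =
      (injLabCount (A.G.induce {v : Fin A.n | A.G.dist A.root v < l})
          (fun v => Nat.card {u : Fin A.n // A.G.Adj v.1 u ∧ A.G.dist A.root u = l})
          G : ℚ) *
        ∏ᶠ i ∈ {i : Fin A.n | A.G.dist A.root i = l - 1},
          ((Nat.card {u : Fin A.n // A.G.Adj i u ∧ A.G.dist A.root u = l}).factorial : ℚ) := by
  classical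
  have hn : 0 < n := by
    have : Nonempty (Fin n) := hG.isConnected.nonempty
    exact Fin.pos_iff_nonempty.mpr this
  have hnQ : (n : ℚ) ≠ 0 := Nat.cast_ne_zero.mpr (by omega)
  have hLHS : (n : ℚ) * ((nbhdCount G l A.G A.root : ℚ) / (n : ℚ)) * (A.autCard : ℚ)
      = ((nbhdCount G l A.G A.root * A.autCard : ℕ) : ℚ) := by
    push_cast
    field_simp
  have hkey : nbhdCount G l A.G A.root * A.autCard =
      injLabCount (TpG A l) (rS A l) G *
        ∏ᶠ i : SphT A l, Nat.factorial (Nat.card (ChildT A l i.1)) := by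
    rw [← card_S1_count hG, card_S1_eq_Mt hG hl hdepth, ← card_S2_eq_Mt hG hl hdepth,
      card_S2_count hG hl]
  letI : Fintype (SphT A l) := Fintype.ofFinite _
  have hprod : ∏ᶠ i ∈ {i : Fin A.n | A.G.dist A.root i = l - 1},
      ((Nat.card {u : Fin A.n // A.G.Adj i u ∧ A.G.dist A.root u = l}).factorial : ℚ)
      = ((∏ᶠ i : SphT A l, Nat.factorial (Nat.card (ChildT A l i.1)) : ℕ) : ℚ) := by
    have hfin : ({i : Fin A.n | A.G.dist A.root i = l - 1}).Finite := Set.toFinite _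
    rw [← hfin.coe_toFinset, finprod_mem_coe_finset, finprod_eq_prod_of_fintype,
      Nat.cast_prod]
    exact Finset.prod_subtype hfin.toFinset (fun x => hfin.mem_toFinset) _
  rw [hLHS, hkey, hprod]
  have hinjeq : injLabCount (TpG A l) (rS A l) G =
      injLabCount (A.G.induce {v : Fin A.n | A.G.dist A.root v < l})
        (fun v => Nat.card {u : Fin A.n // A.G.Adj v.1 u ∧ A.G.dist A.root u = l}) G := rfl
  push_cast
  rw [hinjeq]

end RTrees
end
end
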